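/- For the Lambda-coalescent with Λ(dx) = g(x)dx where g(x) ~ B x^{1−α} as x → 0 for some B > 0 and α ∈ (1,2), the total coalescence rate λ_n when there are n blocks satisfies λ_n ~ c n^α as n → ∞, for some constant c > 0 depending only on α and B. -/

import Mathlib

open MeasureTheory Filter Real

section Aux
open Set Topology

noncomputable def Pn (n : ℕ) (x : ℝ) : ℝ := 1 - (1 - x) ^ n - n * x * (1 - x) ^ (n - 1)

lemma Pn_succ (n : ℕ) (x : ℝ) :
    Pn (n + 1) x = Pn n x + n * x ^ 2 * (1 - x) ^ (n - 1) := by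
  rcases n with _ | m
  · simp [Pn]
  · have e1 : m + 1 + 1 - 1 = m + 1 := rfl
    have e2 : m + 1 - 1 = m := rfl
    simp only [Pn, e1, e2, Nat.cast_add, Nat.cast_one]
    rw [show m + 1 + 1 = (m + 1) + 1 from rfl, pow_succ ((1:ℝ)-x) (m+1), pow_succ ((1:ℝ)-x) m]
    ring

lemma Pn_nonneg (n : ℕ) {x : ℝ} (h0 : 0 ≤ x) (h1 : x ≤ 1) : 0 ≤ Pn n x := by
  have h1x : (0:ℝ) ≤ 1 - x := by linarith
  induction n with
  | zero => simp [Pn]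
  | succ m ih =>
    rw [Pn_succ]
    have : (0:ℝ) ≤ (m:ℝ) * x ^ 2 * (1 - x) ^ (m - 1) :=
      mul_nonneg (mul_nonneg (Nat.cast_nonneg m) (sq_nonneg x)) (pow_nonneg h1x _)
    linarith

lemma Pn_le_one (n : ℕ) {x : ℝ} (h0 : 0 ≤ x) (h1 : x ≤ 1) : Pn n x ≤ 1 := by
  have h1x : (0:ℝ) ≤ 1 - x := by linarith
  have h2 : (0:ℝ) ≤ (1 - x) ^ n := pow_nonneg h1x _
  have h3 : (0:ℝ) ≤ (n:ℝ) * x * (1 - x) ^ (n - 1) :=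
    mul_nonneg (mul_nonneg (Nat.cast_nonneg n) h0) (pow_nonneg h1x _)
  simp only [Pn]; linarith

lemma Pn_le_sq (n : ℕ) {x : ℝ} (h0 : 0 ≤ x) (h1 : x ≤ 1) :
    Pn n x ≤ (n : ℝ) ^ 2 / 2 * x ^ 2 := by
  have h1x : (0:ℝ) ≤ 1 - x := by linarith
  induction n with
  | zero => simp [Pn]
  | succ m ih =>
    rw [Pn_succ]
    have h2 : (m:ℝ) * x ^ 2 * (1 - x) ^ (m - 1) ≤ m * x ^ 2 := by
      have hle : (1 - x) ^ (m - 1) ≤ 1 := pow_le_one₀ h1x (by linarith)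
      have hx : (0:ℝ) ≤ (m:ℝ) * x ^ 2 := mul_nonneg (Nat.cast_nonneg m) (sq_nonneg x)
      calc (m:ℝ) * x ^ 2 * (1 - x) ^ (m - 1) ≤ (m:ℝ) * x ^ 2 * 1 :=
            mul_le_mul_of_nonneg_left hle hx
        _ = m * x ^ 2 := by ring
    have hsq : (0:ℝ) ≤ x ^ 2 := sq_nonneg x
    have hm : (0:ℝ) ≤ (m:ℝ) := Nat.cast_nonneg m
    push_cast
    nlinarith [ih]

lemma Pn_cont (n : ℕ) : Continuous (Pn n) := by
  unfold Pn; fun_prop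

lemma Pn_tendsto (y : ℝ) :
    Tendsto (fun n : ℕ => Pn n (y / n)) atTop (𝓝 (1 - exp (-y) - y * exp (-y))) := by
  have h0 : Tendsto (fun n : ℕ => y / n) atTop (𝓝 0) := tendsto_const_div_atTop_nhds_zero_nat y
  have h1 : Tendsto (fun n : ℕ => (1 - y / n) ^ n) atTop (𝓝 (exp (-y))) := by
    refine (Real.tendsto_one_add_div_pow_exp (-y)).congr fun n => by rw [neg_div, ← sub_eq_add_neg]
  have h2 : Tendsto (fun n : ℕ => 1 - y / n) atTop (𝓝 1) := by
    simpa using tendsto_const_nhds.sub h0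
  have hne : ∀ᶠ n : ℕ in atTop, (1:ℝ)/2 < 1 - y / n :=
    h2.eventually_const_lt (by norm_num)
  have h3 : Tendsto (fun n : ℕ => (1 - y / n) ^ (n - 1)) atTop (𝓝 (exp (-y))) := by
    have hq : Tendsto (fun n : ℕ => (1 - y / n) ^ n / (1 - y / n)) atTop (𝓝 (exp (-y) / 1)) :=
      h1.div h2 one_ne_zero
    rw [div_one] at hq
    refine hq.congr' ?_
    filter_upwards [hne, eventually_ge_atTop 1] with n hn hn1
    have hne0 : (1 : ℝ) - y / n ≠ 0 := by linarith
    rw [← pow_sub_one_mul (by omega : n ≠ 0) ((1:ℝ) - y / n), mul_div_assoc,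
      div_self hne0, mul_one]
  have hmain : Tendsto (fun n : ℕ => 1 - (1 - y / n) ^ n - y * (1 - y / n) ^ (n - 1)) atTop
      (𝓝 (1 - exp (-y) - y * exp (-y))) :=
    (tendsto_const_nhds.sub h1).sub (tendsto_const_nhds.mul h3)
  refine hmain.congr' ?_
  filter_upwards [eventually_ge_atTop 1] with n hn1
  have hn0 : (n : ℝ) ≠ 0 := by positivity
  simp only [Pn]
  rw [mul_div_assoc']
  congr 2
  field_simp

lemma contOn_rpow (c : ℝ) : ContinuousOn (fun y : ℝ => y ^ c) (Ioi 0) := by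
  intro x hx
  exact (continuousAt_rpow_const x c (Or.inl (ne_of_gt hx))).continuousWithinAt

lemma G_nonneg {α : ℝ} {y : ℝ} (hy : 0 < y) : 0 ≤ min 1 (y ^ 2 / 2) * y ^ (-1 - α) := by
  apply mul_nonneg (le_min zero_le_one (by positivity)) (rpow_nonneg hy.le _)

lemma G_integrable {α : ℝ} (hα1 : 1 < α) (hα2 : α < 2) :
    IntegrableOn (fun y : ℝ => min 1 (y ^ 2 / 2) * y ^ (-1 - α)) (Ioi 0) := by
  have hGm : AEStronglyMeasurable (fun y : ℝ => min 1 (y ^ 2 / 2) * y ^ (-1 - α))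
      (volume.restrict (Ioi 0)) := by
    apply ContinuousOn.aestronglyMeasurable ?_ measurableSet_Ioi
    exact ((continuous_const.min ((continuous_pow 2).div_const 2)).continuousOn).mul
      (contOn_rpow _)
  rw [← Ioc_union_Ioi_eq_Ioi (zero_le_one (α := ℝ)), integrableOn_union]
  constructor
  · have hmaj : IntegrableOn (fun y : ℝ => y ^ (1 - α) / 2) (Ioc 0 1) := by
      have := (intervalIntegral.intervalIntegrable_rpow' (r := 1 - α) (by linarith)
        (a := (0:ℝ)) (b := 1)).1
      exact this.div_const 2
    refine hmaj.mono' (hGm.mono_set Ioc_subset_Ioi_self) ?_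
    filter_upwards [ae_restrict_mem measurableSet_Ioc] with y hy
    obtain ⟨hy0, hy1⟩ := hy
    have h1 : min 1 (y ^ 2 / 2) * y ^ (-1 - α) ≤ y ^ 2 / 2 * y ^ (-1 - α) :=
      mul_le_mul_of_nonneg_right (min_le_right _ _) (rpow_nonneg hy0.le _)
    have h2 : y ^ 2 / 2 * y ^ (-1 - α) = y ^ (1 - α) / 2 := by
      rw [div_mul_eq_mul_div, ← rpow_natCast y 2, ← rpow_add hy0,
        show ((2:ℕ):ℝ) + (-1 - α) = 1 - α by push_cast; ring]
    rw [Real.norm_eq_abs, abs_of_nonneg (G_nonneg hy0)]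
    rw [h2] at h1; exact h1
  · have hmaj : IntegrableOn (fun y : ℝ => y ^ (-1 - α)) (Ioi 1) :=
      integrableOn_Ioi_rpow_of_lt (by linarith) one_pos
    refine hmaj.mono' (hGm.mono_set (Ioi_subset_Ioi zero_le_one)) ?_
    filter_upwards [ae_restrict_mem measurableSet_Ioi] with y hy
    have hy0 : (0:ℝ) < y := lt_trans one_pos hy
    rw [Real.norm_eq_abs, abs_of_nonneg (G_nonneg hy0)]
    calc min 1 (y ^ 2 / 2) * y ^ (-1 - α) ≤ 1 * y ^ (-1 - α) :=
          mul_le_mul_of_nonneg_right (min_le_left _ _) (rpow_nonneg hy0.le _)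
      _ = y ^ (-1 - α) := one_mul _


noncomputable def hfun (α : ℝ) (y : ℝ) : ℝ := (1 - exp (-y) - y * exp (-y)) * y ^ (-1 - α)

lemma hfun_pos {α y : ℝ} (hy : 0 < y) : 0 < hfun α y := by
  have h1 : (1 : ℝ) + y < exp y := by
    have := add_one_lt_exp (x := y) (ne_of_gt hy)
    linarith
  have h2 : exp (-y) * (1 + y) < exp (-y) * exp y :=
    mul_lt_mul_of_pos_left h1 (exp_pos _)
  rw [← exp_add, neg_add_cancel, exp_zero] at h2
  have h3 : 0 < 1 - exp (-y) - y * exp (-y) := by nlinarith [exp_pos (-y)]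
  exact mul_pos h3 (rpow_pos_of_pos hy _)

lemma hfun_le {α y : ℝ} (hy : 0 < y) : hfun α y ≤ 2 * (min 1 (y ^ 2 / 2) * y ^ (-1 - α)) := by
  have he : 1 - y ≤ exp (-y) := by
    have := add_one_le_exp (-y); linarith
  have h2 : (1 - y) * (1 + y) ≤ exp (-y) * (1 + y) :=
    mul_le_mul_of_nonneg_right he (by linarith)
  have hb : 1 - exp (-y) - y * exp (-y) ≤ y ^ 2 := by nlinarith
  have hb1 : 1 - exp (-y) - y * exp (-y) ≤ 1 := by
    nlinarith [exp_pos (-y), hy.le]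
  have hmin : 1 - exp (-y) - y * exp (-y) ≤ 2 * min 1 (y ^ 2 / 2) := by
    rcases le_total (y ^ 2 / 2) 1 with h | h
    · rw [min_eq_right h]; linarith
    · rw [min_eq_left h]; linarith
  have := mul_le_mul_of_nonneg_right hmin (rpow_nonneg hy.le (-1 - α))
  calc hfun α y ≤ 2 * min 1 (y ^ 2 / 2) * y ^ (-1 - α) := this
    _ = 2 * (min 1 (y ^ 2 / 2) * y ^ (-1 - α)) := by ring

lemma hfun_integrable {α : ℝ} (hα1 : 1 < α) (hα2 : α < 2) :
    IntegrableOn (hfun α) (Ioi 0) := by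
  refine ((G_integrable hα1 hα2).const_mul 2).mono' ?_ ?_
  · exact ((by fun_prop : Continuous fun y : ℝ => 1 - exp (-y) - y * exp (-y)).continuousOn.mul
      (contOn_rpow _)).aestronglyMeasurable measurableSet_Ioi
  · filter_upwards [ae_restrict_mem measurableSet_Ioi] with y hy
    rw [Real.norm_eq_abs, abs_of_nonneg (hfun_pos hy).le]
    exact hfun_le hy

lemma c0_pos {α : ℝ} (hα1 : 1 < α) (hα2 : α < 2) :
    0 < ∫ y in Ioi (0:ℝ), hfun α y := by
  rw [setIntegral_pos_iff_support_of_nonneg_ae ?_ (hfun_integrable hα1 hα2)]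
  · refine lt_of_lt_of_le ?_ (measure_mono (?_ : Ioi (0:ℝ) ⊆ Function.support (hfun α) ∩ Ioi 0))
    · rw [Real.volume_Ioi]; exact ENNReal.zero_lt_top
    · intro y hy
      exact ⟨ne_of_gt (hfun_pos hy), hy⟩
  · filter_upwards [ae_restrict_mem measurableSet_Ioi] with y hy
    exact (hfun_pos hy).le

lemma keyI {α : ℝ} (hα1 : 1 < α) (hα2 : α < 2) :
    Tendsto (fun n : ℕ => ∫ y in Ioc (0:ℝ) (n:ℝ), Pn n (y / n) * y ^ (-1 - α)) atTop
      (𝓝 (∫ y in Ioi (0:ℝ), hfun α y)) := by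
  have hmeas : ∀ n : ℕ, AEStronglyMeasurable
      (fun y : ℝ => indicator (Ioc 0 (n:ℝ)) (fun y => Pn n (y / n) * y ^ (-1 - α)) y)
      (volume.restrict (Ioi 0)) := by
    intro n
    apply AEStronglyMeasurable.indicator ?_ measurableSet_Ioc
    exact (((Pn_cont n).comp (continuous_id.div_const _)).continuousOn.mul
      (contOn_rpow _)).aestronglyMeasurable measurableSet_Ioi
  have key := tendsto_integral_of_dominated_convergence
    (μ := volume.restrict (Ioi (0:ℝ)))
    (F := fun n (y : ℝ) => indicator (Ioc 0 (n:ℝ)) (fun y => Pn n (y / n) * y ^ (-1 - α)) y)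
    (f := fun y => (1 - exp (-y) - y * exp (-y)) * y ^ (-1 - α))
    (fun y : ℝ => min 1 (y ^ 2 / 2) * y ^ (-1 - α))
    hmeas (G_integrable hα1 hα2) ?_ ?_
  · refine key.congr fun n => ?_
    rw [integral_indicator measurableSet_Ioc, Measure.restrict_restrict measurableSet_Ioc,
      inter_eq_left.mpr Ioc_subset_Ioi_self]
  · -- h_bound
    intro n
    filter_upwards [ae_restrict_mem measurableSet_Ioi] with y hy
    rcases em (y ∈ Ioc (0:ℝ) (n:ℝ)) with hmem | hmem
    · rw [indicator_of_mem hmem]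
      obtain ⟨hy0, hyn⟩ := hmem
      have hn0 : (0:ℝ) < n := lt_of_lt_of_le hy0 hyn
      have hx0 : 0 ≤ y / n := div_nonneg hy0.le hn0.le
      have hx1 : y / n ≤ 1 := (div_le_one hn0).mpr hyn
      have hP0 : 0 ≤ Pn n (y / n) := Pn_nonneg n hx0 hx1
      have hPmin : Pn n (y / n) ≤ min 1 (y ^ 2 / 2) := by
        refine le_min (Pn_le_one n hx0 hx1) ?_
        have := Pn_le_sq n hx0 hx1
        calc Pn n (y / n) ≤ (n:ℝ) ^ 2 / 2 * (y / n) ^ 2 := this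
          _ = y ^ 2 / 2 := by field_simp
      rw [Real.norm_eq_abs, abs_of_nonneg (mul_nonneg hP0 (rpow_nonneg hy0.le _))]
      exact mul_le_mul_of_nonneg_right hPmin (rpow_nonneg hy0.le _)
    · rw [indicator_of_notMem hmem]
      simpa using G_nonneg (α := α) hy
  · -- h_lim
    filter_upwards [ae_restrict_mem measurableSet_Ioi] with y hy
    have := (Pn_tendsto y).mul_const (y ^ (-1 - α))
    refine this.congr' ?_
    filter_upwards [eventually_ge_atTop ⌈y⌉₊] with n hn
    have hyn : y ≤ n := le_trans (Nat.le_ceil y) (by exact_mod_cast hn)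
    rw [indicator_of_mem (Set.mem_Ioc.mpr ⟨hy, hyn⟩)]

lemma subst {α : ℝ} (n : ℕ) (hn : 1 ≤ n) :
    (∫ y in Ioc (0:ℝ) (n:ℝ), Pn n (y / n) * y ^ (-1 - α))
      = (n:ℝ) ^ (-α) * ∫ x in Ioc (0:ℝ) 1, Pn n x * x ^ (-1 - α) := by
  have hn0 : (0:ℝ) < n := by exact_mod_cast hn
  have hnc : (n:ℝ) ^ (-1 - α) ≠ 0 := (rpow_pos_of_pos hn0 _).ne'
  have h2 : (∫ y in Ioc (0:ℝ) (n:ℝ), Pn n (y / n) * y ^ (-1 - α))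
      = (n:ℝ) ^ (-1 - α) * ∫ y in Ioc (0:ℝ) (n:ℝ),
          (fun x => Pn n x * x ^ (-1 - α)) (y / n) := by
    rw [← integral_const_mul]
    apply setIntegral_congr_fun measurableSet_Ioc
    intro y hy
    simp only
    rw [div_rpow hy.1.le hn0.le, div_eq_mul_inv (y ^ (-1-α))]
    field_simp
  rw [h2, ← intervalIntegral.integral_of_le hn0.le,
    intervalIntegral.integral_comp_div (fun x => Pn n x * x ^ (-1 - α)) hn0.ne',
    zero_div, div_self hn0.ne', smul_eq_mul, intervalIntegral.integral_of_le zero_le_one,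
    ← mul_assoc]
  congr 1
  rw [show -α = (-1 - α) + 1 by ring, rpow_add_one hn0.ne', mul_comm]

lemma rpow_helper2 {x : ℝ} (hx : 0 < x) (α : ℝ) : x ^ 2 * x ^ (-1 - α) = x ^ (1 - α) := by
  rw [← rpow_natCast x 2, ← rpow_add hx, show ((2:ℕ):ℝ) + (-1 - α) = 1 - α by push_cast; ring]

lemma rpow_helper {x : ℝ} (hx : 0 < x) (α : ℝ) : x ^ (1 - α) / x ^ 2 = x ^ (-1 - α) := by
  rw [← rpow_helper2 hx α, mul_div_cancel_left₀ _ (pow_ne_zero 2 hx.ne')]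


end Aux

open Set Topology in
/-- for the Λ-coalescent with `Λ(dx) = g(x)dx` where
`g(x) ~ B x^{1−α}` as `x → 0+` (`B > 0`, `α ∈ (1,2)`), the total coalescence
rate `λ_n = ∫_0^1 x^{−2}(1 − (1−x)^n − nx(1−x)^{n−1}) g(x) dx` satisfies
`λ_n ~ c n^α` for some constant `c > 0`. -/
theorem stmt8 (B α : ℝ) (hB : 0 < B) (hα1 : 1 < α) (hα2 : α < 2)
    (g : ℝ → ℝ) (hgmeas : Measurable g)
    (hgnn : ∀ x ∈ Set.Ioc (0 : ℝ) 1, 0 ≤ g x)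
    (hgint : IntegrableOn g (Set.Ioc 0 1))
    (hasymp : Tendsto (fun x => g x / (B * x ^ (1 - α)))
      (nhdsWithin 0 (Set.Ioi 0)) (nhds 1)) :
    ∃ c > (0 : ℝ),
      Tendsto (fun n : ℕ =>
          (∫ x in Set.Ioc (0 : ℝ) 1,
            (1 - (1 - x) ^ n - n * x * (1 - x) ^ (n - 1)) / x ^ 2 * g x)
          / (c * (n : ℝ) ^ α))
        atTop (nhds 1) := by
  set c₀ : ℝ := ∫ y in Ioi (0:ℝ), hfun α y with hc₀
  have hc₀pos : 0 < c₀ := c0_pos hα1 hα2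
  set J : ℕ → ℝ := fun n => ∫ x in Ioc (0:ℝ) 1, Pn n x * x ^ (-1 - α) with hJdef
  set r : ℝ → ℝ := fun x => g x - B * x ^ (1 - α) with hrdef
  set R : ℕ → ℝ := fun n => ∫ x in Ioc (0:ℝ) 1, Pn n x / x ^ 2 * r x with hRdef
  -- basic integrabilities
  have hpow_int : IntegrableOn (fun x : ℝ => B * x ^ (1 - α)) (Ioc 0 1) :=
    ((intervalIntegral.intervalIntegrable_rpow' (by linarith : (-1:ℝ) < 1 - α)
      (a := 0) (b := 1)).1).const_mul B
  have hr_int : IntegrableOn r (Ioc 0 1) := hgint.sub hpow_int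
  have hq_meas : ∀ n : ℕ, Measurable (fun x : ℝ => Pn n x / x ^ 2) := fun n =>
    (Pn_cont n).measurable.div ((continuous_pow 2).measurable)
  have hq_nonneg : ∀ (n : ℕ) (x : ℝ), x ∈ Ioc (0:ℝ) 1 → 0 ≤ Pn n x / x ^ 2 := fun n x hx =>
    div_nonneg (Pn_nonneg n hx.1.le hx.2) (sq_nonneg x)
  have hq_le : ∀ (n : ℕ) (x : ℝ), x ∈ Ioc (0:ℝ) 1 → Pn n x / x ^ 2 ≤ (n:ℝ) ^ 2 / 2 :=
    fun n x hx => by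
      rw [div_le_iff₀ (pow_pos hx.1 2)]
      exact Pn_le_sq n hx.1.le hx.2
  have hJint : ∀ n : ℕ, IntegrableOn (fun x : ℝ => Pn n x * x ^ (-1 - α)) (Ioc 0 1) := by
    intro n
    refine Integrable.mono'
      (((intervalIntegral.intervalIntegrable_rpow' (by linarith : (-1:ℝ) < 1 - α)
        (a := 0) (b := 1)).1).const_mul ((n:ℝ) ^ 2 / 2)) ?_ ?_
    · exact (((Pn_cont n).continuousOn.mul (contOn_rpow _)).aestronglyMeasurable
        measurableSet_Ioi).mono_set Ioc_subset_Ioi_self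
    · filter_upwards [ae_restrict_mem measurableSet_Ioc] with x hx
      have h0 : 0 ≤ Pn n x * x ^ (-1 - α) :=
        mul_nonneg (Pn_nonneg n hx.1.le hx.2) (rpow_nonneg hx.1.le _)
      rw [Real.norm_eq_abs, abs_of_nonneg h0]
      calc Pn n x * x ^ (-1 - α) ≤ ((n:ℝ) ^ 2 / 2 * x ^ 2) * x ^ (-1 - α) :=
            mul_le_mul_of_nonneg_right (Pn_le_sq n hx.1.le hx.2) (rpow_nonneg hx.1.le _)
        _ = (n:ℝ) ^ 2 / 2 * x ^ (1 - α) := by rw [mul_assoc, rpow_helper2 hx.1]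
  have hJnonneg : ∀ n : ℕ, 0 ≤ J n := fun n =>
    setIntegral_nonneg measurableSet_Ioc fun x hx =>
      mul_nonneg (Pn_nonneg n hx.1.le hx.2) (rpow_nonneg hx.1.le _)
  have hRint : ∀ n : ℕ, IntegrableOn (fun x : ℝ => Pn n x / x ^ 2 * r x) (Ioc 0 1) := by
    intro n
    refine Integrable.mono' (hr_int.norm.const_mul ((n:ℝ) ^ 2 / 2))
      (((hq_meas n).aestronglyMeasurable).mul hr_int.aestronglyMeasurable) ?_
    filter_upwards [ae_restrict_mem measurableSet_Ioc] with x hx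
    rw [norm_mul]
    apply mul_le_mul_of_nonneg_right ?_ (norm_nonneg _)
    rw [Real.norm_eq_abs, abs_of_nonneg (hq_nonneg n x hx)]
    exact hq_le n x hx
  -- decomposition
  have hsplit : ∀ n : ℕ,
      (∫ x in Ioc (0:ℝ) 1, (1 - (1 - x) ^ n - n * x * (1 - x) ^ (n - 1)) / x ^ 2 * g x)
        = R n + B * J n := by
    intro n
    have heq : ∀ x ∈ Ioc (0:ℝ) 1,
        (1 - (1 - x) ^ n - n * x * (1 - x) ^ (n - 1)) / x ^ 2 * g x
          = Pn n x / x ^ 2 * r x + B * (Pn n x * x ^ (-1 - α)) := by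
      intro x hx
      have h1 : B * (Pn n x * x ^ (-1 - α)) = Pn n x / x ^ 2 * (B * x ^ (1 - α)) := by
        rw [← rpow_helper hx.1 α]
        field_simp
      rw [h1, hrdef]
      show (1 - (1 - x) ^ n - n * x * (1 - x) ^ (n - 1)) / x ^ 2 * g x
        = Pn n x / x ^ 2 * (g x - B * x ^ (1 - α)) + Pn n x / x ^ 2 * (B * x ^ (1 - α))
      rw [Pn]
      ring
    rw [setIntegral_congr_fun measurableSet_Ioc heq,
      integral_add (hRint n) ((hJint n).const_mul B), integral_const_mul]
  -- the J limit
  have hu : Tendsto (fun n : ℕ => (n:ℝ) ^ (-α) * J n) atTop (𝓝 c₀) := by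
    refine (keyI hα1 hα2).congr' ?_
    filter_upwards [eventually_ge_atTop 1] with n hn
    exact subst n hn
  -- the R bound
  have hRbound : ∀ ε : ℝ, 0 < ε → ∃ C : ℝ, ∀ n : ℕ, |R n| ≤ ε * B * J n + C := by
    intro ε hε
    have hev : ∀ᶠ x in 𝓝[>] (0:ℝ), dist (g x / (B * x ^ (1 - α))) 1 < ε :=
      Metric.tendsto_nhds.mp hasymp ε hε
    rw [eventually_nhdsWithin_iff] at hev
    obtain ⟨δ, hδpos, hδ⟩ := Metric.eventually_nhds_iff.mp hev
    set t : ℝ := min (δ / 2) 1 with htdef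
    have ht0 : 0 < t := lt_min (by linarith) one_pos
    have ht1 : t ≤ 1 := min_le_right _ _
    have hr_small : ∀ x ∈ Ioc (0:ℝ) t, |r x| ≤ ε * (B * x ^ (1 - α)) := by
      intro x hx
      have hx0 : 0 < x := hx.1
      have hxδ : dist x (0:ℝ) < δ := by
        rw [Real.dist_eq, sub_zero, abs_of_pos hx0]
        calc x ≤ t := hx.2
          _ ≤ δ / 2 := min_le_left _ _
          _ < δ := by linarith
      have hBx : 0 < B * x ^ (1 - α) := mul_pos hB (rpow_pos_of_pos hx0 _)
      have := hδ hxδ hx0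
      rw [Real.dist_eq] at this
      have heq : r x = (g x / (B * x ^ (1 - α)) - 1) * (B * x ^ (1 - α)) := by
        field_simp
        rfl
      rw [heq, abs_mul, abs_of_pos hBx]
      exact mul_le_mul_of_nonneg_right this.le hBx.le
    refine ⟨(t ^ 2)⁻¹ * ∫ x in Ioc (0:ℝ) 1, |r x|, fun n => ?_⟩
    have habs_int : IntegrableOn (fun x : ℝ => |Pn n x / x ^ 2 * r x|) (Ioc 0 1) :=
      (hRint n).abs
    have hJint2 : IntegrableOn (fun x : ℝ => ε * B * (Pn n x * x ^ (-1 - α))) (Ioc 0 1) :=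
      (hJint n).const_mul (ε * B)
    have habs2 : IntegrableOn (fun x : ℝ => (t ^ 2)⁻¹ * |r x|) (Ioc 0 1) :=
      hr_int.abs.const_mul _
    have hsub1 : Ioc (0:ℝ) t ⊆ Ioc 0 1 := Ioc_subset_Ioc_right ht1
    have hsub2 : Ioc t (1:ℝ) ⊆ Ioc 0 1 := Ioc_subset_Ioc_left ht0.le
    have step1 : |R n| ≤ ∫ x in Ioc (0:ℝ) 1, |Pn n x / x ^ 2 * r x| := by
      calc |R n| = ‖∫ x in Ioc (0:ℝ) 1, Pn n x / x ^ 2 * r x‖ := by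
            rw [hRdef, Real.norm_eq_abs]
        _ ≤ ∫ x in Ioc (0:ℝ) 1, ‖Pn n x / x ^ 2 * r x‖ := norm_integral_le_integral_norm _
        _ = ∫ x in Ioc (0:ℝ) 1, |Pn n x / x ^ 2 * r x| := by
            simp only [Real.norm_eq_abs]
    have hunion : Ioc (0:ℝ) t ∪ Ioc t 1 = Ioc 0 1 := Ioc_union_Ioc_eq_Ioc ht0.le ht1
    have step2 : (∫ x in Ioc (0:ℝ) 1, |Pn n x / x ^ 2 * r x|)
        = (∫ x in Ioc (0:ℝ) t, |Pn n x / x ^ 2 * r x|)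
          + ∫ x in Ioc t (1:ℝ), |Pn n x / x ^ 2 * r x| := by
      rw [← hunion, setIntegral_union (Ioc_disjoint_Ioc_of_le le_rfl) measurableSet_Ioc
        (habs_int.mono_set hsub1) (habs_int.mono_set hsub2)]
    have step3 : (∫ x in Ioc (0:ℝ) t, |Pn n x / x ^ 2 * r x|)
        ≤ ε * B * J n := by
      have hle : ∀ x ∈ Ioc (0:ℝ) t, |Pn n x / x ^ 2 * r x|
          ≤ ε * B * (Pn n x * x ^ (-1 - α)) := by
        intro x hx
        have hx' : x ∈ Ioc (0:ℝ) 1 := hsub1 hx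
        rw [abs_mul, abs_of_nonneg (hq_nonneg n x hx')]
        calc Pn n x / x ^ 2 * |r x| ≤ Pn n x / x ^ 2 * (ε * (B * x ^ (1 - α))) :=
              mul_le_mul_of_nonneg_left (hr_small x hx) (hq_nonneg n x hx')
          _ = ε * B * (Pn n x * (x ^ (1 - α) / x ^ 2)) := by ring
          _ = ε * B * (Pn n x * x ^ (-1 - α)) := by rw [rpow_helper hx'.1]
      calc (∫ x in Ioc (0:ℝ) t, |Pn n x / x ^ 2 * r x|)
          ≤ ∫ x in Ioc (0:ℝ) t, ε * B * (Pn n x * x ^ (-1 - α)) :=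
            setIntegral_mono_on (habs_int.mono_set hsub1)
              (hJint2.mono_set hsub1) measurableSet_Ioc hle
        _ ≤ ∫ x in Ioc (0:ℝ) 1, ε * B * (Pn n x * x ^ (-1 - α)) := by
            refine setIntegral_mono_set hJint2 ?_
              (HasSubset.Subset.eventuallyLE hsub1)
            filter_upwards [ae_restrict_mem measurableSet_Ioc] with x hx
            exact mul_nonneg (by positivity)
              (mul_nonneg (Pn_nonneg n hx.1.le hx.2) (rpow_nonneg hx.1.le _))
        _ = ε * B * J n := integral_const_mul _ _
    have step4 : (∫ x in Ioc t (1:ℝ), |Pn n x / x ^ 2 * r x|)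
        ≤ (t ^ 2)⁻¹ * ∫ x in Ioc (0:ℝ) 1, |r x| := by
      have hle : ∀ x ∈ Ioc t (1:ℝ), |Pn n x / x ^ 2 * r x| ≤ (t ^ 2)⁻¹ * |r x| := by
        intro x hx
        have hx0 : 0 < x := lt_trans ht0 hx.1
        have hx' : x ∈ Ioc (0:ℝ) 1 := hsub2 hx
        rw [abs_mul, abs_of_nonneg (hq_nonneg n x hx')]
        apply mul_le_mul_of_nonneg_right ?_ (abs_nonneg _)
        have h1 : Pn n x / x ^ 2 ≤ 1 / x ^ 2 := by
          gcongr
          exact Pn_le_one n hx'.1.le hx'.2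
        have h2 : (1:ℝ) / x ^ 2 ≤ (t ^ 2)⁻¹ := by
          rw [one_div]
          apply inv_anti₀ (pow_pos ht0 2)
          exact pow_le_pow_left₀ ht0.le hx.1.le 2
        exact h1.trans h2
      calc (∫ x in Ioc t (1:ℝ), |Pn n x / x ^ 2 * r x|)
          ≤ ∫ x in Ioc t (1:ℝ), (t ^ 2)⁻¹ * |r x| :=
            setIntegral_mono_on (habs_int.mono_set hsub2)
              (habs2.mono_set hsub2) measurableSet_Ioc hle
        _ ≤ ∫ x in Ioc (0:ℝ) 1, (t ^ 2)⁻¹ * |r x| := by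
            refine setIntegral_mono_set habs2 ?_
              (HasSubset.Subset.eventuallyLE hsub2)
            filter_upwards [] with x
            positivity
        _ = (t ^ 2)⁻¹ * ∫ x in Ioc (0:ℝ) 1, |r x| := integral_const_mul _ _
    calc |R n| ≤ _ := step1
      _ = _ := step2
      _ ≤ ε * B * J n + (t ^ 2)⁻¹ * ∫ x in Ioc (0:ℝ) 1, |r x| := add_le_add step3 step4
  -- R n * n^{-α} → 0
  have hnα : Tendsto (fun n : ℕ => (n:ℝ) ^ (-α)) atTop (𝓝 0) :=
    (tendsto_rpow_neg_atTop (by linarith)).comp tendsto_natCast_atTop_atTop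
  have hv : Tendsto (fun n : ℕ => (n:ℝ) ^ (-α) * R n) atTop (𝓝 0) := by
    rw [NormedAddCommGroup.tendsto_nhds_zero]
    intro ε hε
    have hc1 : 0 < c₀ + 1 := by linarith
    set ε₁ : ℝ := ε / (4 * B * (c₀ + 1)) with hε₁def
    have hε₁ : 0 < ε₁ := by positivity
    obtain ⟨C, hC⟩ := hRbound ε₁ hε₁
    have hev1 : ∀ᶠ n : ℕ in atTop, (n:ℝ) ^ (-α) * J n < c₀ + 1 :=
      hu.eventually_lt_const (by linarith)
    have h0C : Tendsto (fun n : ℕ => |C| * (n:ℝ) ^ (-α)) atTop (𝓝 0) := by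
      simpa using hnα.const_mul |C|
    have hev2 : ∀ᶠ n : ℕ in atTop, |C| * (n:ℝ) ^ (-α) < ε / 2 :=
      h0C.eventually_lt_const (by linarith : (0:ℝ) < ε / 2)
    filter_upwards [hev1, hev2] with n h1 h2
    have hnn : (0:ℝ) ≤ (n:ℝ) ^ (-α) := rpow_nonneg (Nat.cast_nonneg n) _
    rw [Real.norm_eq_abs, abs_mul, abs_of_nonneg hnn]
    calc (n:ℝ) ^ (-α) * |R n| ≤ (n:ℝ) ^ (-α) * (ε₁ * B * J n + C) :=
          mul_le_mul_of_nonneg_left (hC n) hnn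
      _ = ε₁ * B * ((n:ℝ) ^ (-α) * J n) + C * (n:ℝ) ^ (-α) := by ring
      _ ≤ ε₁ * B * (c₀ + 1) + |C| * (n:ℝ) ^ (-α) := by
          apply add_le_add
          · exact mul_le_mul_of_nonneg_left h1.le (by positivity)
          · exact mul_le_mul_of_nonneg_right (le_abs_self C) hnn
      _ < ε₁ * B * (c₀ + 1) + ε / 2 := by linarith
      _ ≤ ε / 4 + ε / 2 := by
          apply add_le_add_left
          rw [hε₁def]
          rw [div_mul_eq_mul_div, div_mul_eq_mul_div, div_le_div_iff₀ (by positivity) (by norm_num)]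
          ring_nf
          nlinarith [hB, hc1, hε.le]
      _ < ε := by linarith
  -- combine
  refine ⟨B * c₀, mul_pos hB hc₀pos, ?_⟩
  have hcne : B * c₀ ≠ 0 := (mul_pos hB hc₀pos).ne'
  have hlim : Tendsto (fun n : ℕ => ((n:ℝ) ^ (-α) * R n + B * ((n:ℝ) ^ (-α) * J n)) / (B * c₀))
      atTop (𝓝 1) := by
    have h1 : (0 + B * c₀) / (B * c₀) = 1 := by field_simp; ring
    have := (hv.add (hu.const_mul B)).div_const (B * c₀)
    rwa [h1] at this
  refine hlim.congr' ?_
  filter_upwards [eventually_ge_atTop 1] with n hn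
  have hn0 : (0:ℝ) < n := by exact_mod_cast hn
  have hnαpos : (0:ℝ) < (n:ℝ) ^ α := rpow_pos_of_pos hn0 _
  rw [hsplit n]
  rw [rpow_neg hn0.le]
  field_simp
  try ring
  try exact Or.inl trivial
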